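/- If there exist t_1 mutually unbiased SEBks in C^d ⊗ C^{d'} and t_2 mutually unbiased bases of C^q, then there exist at least min{t_1, t_2} mutually unbiased SEBks in C^d ⊗ C^{qd'}; i.e., M_k(d, qd') ≥ min{N(q), M_k(d,d')}. -/

import Mathlib

open Matrix Complex

noncomputable section

/-- Trace inner product on coefficient matrices: the inner product of the
corresponding states of `ℂ^m ⊗ ℂ^n`. -/
def matInner {m n : Type*} [Fintype m] [Fintype n] (A B : Matrix m n ℂ) : ℂ :=
  (Aᴴ * B).trace

/-- The state with coefficient matrix `A` is a special entangled state with Schmidt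
number `k` and all Schmidt coefficients `1/√k`: `rank A = k` and `k·AᴴA` is
idempotent (so the nonzero singular values of `A` are `k` copies of `1/√k`). -/
def IsSEk {m n : Type*} [Fintype m] [Fintype n] (k : ℕ) (A : Matrix m n ℂ) : Prop :=
  A.rank = k ∧ ((k : ℂ) • (Aᴴ * A)) * ((k : ℂ) • (Aᴴ * A)) = (k : ℂ) • (Aᴴ * A)

/-- An SEBk of `ℂ^m ⊗ ℂ^n`: an orthonormal basis of `m·n` special entangled states
with Schmidt number `k`, written via coefficient matrices. -/
def IsSEBk {m n : ℕ} (k : ℕ) (B : Fin (m * n) → Matrix (Fin m) (Fin n) ℂ) : Prop :=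
  (∀ i, IsSEk k (B i)) ∧ ∀ i j, matInner (B i) (B j) = if i = j then 1 else 0

/-- Two bases of `ℂ^m ⊗ ℂ^n` are mutually unbiased. -/
def MUPair {m n : ℕ} (B₁ B₂ : Fin (m * n) → Matrix (Fin m) (Fin n) ℂ) : Prop :=
  ∀ i j, ‖matInner (B₁ i) (B₂ j)‖ = 1 / Real.sqrt (m * n)

/-- There exist `t` pairwise mutually unbiased SEBks in `ℂ^m ⊗ ℂ^n`. -/
def HasMUSEBk (k m n t : ℕ) : Prop :=
  ∃ B : Fin t → Fin (m * n) → Matrix (Fin m) (Fin n) ℂ,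
    (∀ a, IsSEBk k (B a)) ∧ ∀ a b, a ≠ b → MUPair (B a) (B b)

/-- `M_k(m,n)`: the maximum number of pairwise mutually unbiased SEBks in
`ℂ^m ⊗ ℂ^n` (as an extended natural number). -/
def Mnum (k m n : ℕ) : ℕ∞ :=
  sSup {c : ℕ∞ | ∃ t : ℕ, c = t ∧ HasMUSEBk k m n t}

/-- There exist `t` pairwise mutually unbiased orthonormal bases of `ℂ^q`. -/
def HasMUB (q t : ℕ) : Prop :=
  ∃ B : Fin t → Fin q → EuclideanSpace ℂ (Fin q),
    (∀ a, Orthonormal ℂ (B a)) ∧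
    ∀ a b, a ≠ b → ∀ i j, ‖(inner ℂ (B a i) (B b j) : ℂ)‖ = 1 / Real.sqrt q

/-- `N(q)`: the maximum number of mutually unbiased bases of `ℂ^q`. -/
def Nnum (q : ℕ) : ℕ∞ :=
  sSup {c : ℕ∞ | ∃ t : ℕ, c = t ∧ HasMUB q t}

namespace Aux
variable {d d' q : ℕ}

def fsplit {q d' : ℕ} : Fin (q * d') ≃ Fin q × Fin d' := finProdFinEquiv.symm

def tensM (v : Fin q → ℂ) (A : Matrix (Fin d) (Fin d') ℂ) :
    Matrix (Fin d) (Fin (q * d')) ℂ :=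
  fun r c => v (fsplit c).1 * A r (fsplit c).2

lemma conjT_mul (v v' : Fin q → ℂ) (A A' : Matrix (Fin d) (Fin d') ℂ) (c c' : Fin (q * d')) :
    ((tensM v A)ᴴ * tensM v' A') c c' =
      (starRingEnd ℂ) (v (fsplit c).1) * v' (fsplit c').1 *
        (Aᴴ * A') (fsplit c).2 (fsplit c').2 := by
  simp only [Matrix.mul_apply, tensM, Matrix.conjTranspose_apply, star_mul', Finset.mul_sum]
  refine Finset.sum_congr rfl fun r _ => ?_
  simp [RCLike.star_def]
  ring

lemma matInner_tensM (v v' : Fin q → ℂ) (A A' : Matrix (Fin d) (Fin d') ℂ) :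
    matInner (tensM v A) (tensM v' A') =
      (∑ p, (starRingEnd ℂ) (v p) * v' p) * matInner A A' := by
  unfold matInner
  simp only [Matrix.trace, Matrix.diag]
  rw [← Equiv.sum_comp (fsplit (q := q) (d' := d')).symm
    (fun c => ((tensM v A)ᴴ * tensM v' A') c c)]
  simp only [conjT_mul, Equiv.apply_symm_apply]
  rw [Finset.sum_mul_sum]
  rw [Fintype.sum_prod_type]

lemma rank_tensM (v : Fin q → ℂ) (hv : ∃ p, v p ≠ 0) (A : Matrix (Fin d) (Fin d') ℂ) :
    (tensM v A).rank = A.rank := by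
  obtain ⟨p₀, hp₀⟩ := hv
  have hr : LinearMap.range (tensM v A).mulVecLin = LinearMap.range A.mulVecLin := by
    apply le_antisymm
    · rintro x ⟨y, rfl⟩
      refine ⟨fun c₂ => ∑ p, v p * y (finProdFinEquiv (p, c₂)), ?_⟩
      ext r
      simp only [Matrix.mulVecLin_apply, Matrix.mulVec, dotProduct, tensM,
        Finset.mul_sum]
      rw [← Equiv.sum_comp (fsplit (q := q) (d' := d')).symm
        (fun c => v (fsplit c).1 * A r (fsplit c).2 * y c)]
      simp only [Equiv.apply_symm_apply, Fintype.sum_prod_type, fsplit, Equiv.symm_symm]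
      rw [Finset.sum_comm]
      refine Finset.sum_congr rfl fun c₂ _ => Finset.sum_congr rfl fun p _ => by
        simp only [Equiv.symm_apply_apply]; ring
    · rintro x ⟨z, rfl⟩
      refine ⟨fun c => if (fsplit c).1 = p₀ then z (fsplit c).2 / v p₀ else 0, ?_⟩
      ext r
      simp only [Matrix.mulVecLin_apply, Matrix.mulVec, dotProduct, tensM]
      rw [← Equiv.sum_comp (fsplit (q := q) (d' := d')).symm
        (fun c => v (fsplit c).1 * A r (fsplit c).2 *
          (if (fsplit c).1 = p₀ then z (fsplit c).2 / v p₀ else 0))]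
      simp only [Equiv.apply_symm_apply, Fintype.sum_prod_type]
      rw [Finset.sum_comm]
      refine Finset.sum_congr rfl fun c₂ _ => ?_
      rw [Finset.sum_eq_single p₀]
      · simp only [if_pos rfl, if_true]
        field_simp
      · intro p _ hp; simp [hp]
      · simp
  rw [Matrix.rank, Matrix.rank, hr]

lemma idem_tensM (k : ℕ) (v : Fin q → ℂ) (hv : ∑ p, (starRingEnd ℂ) (v p) * v p = 1)
    (A : Matrix (Fin d) (Fin d') ℂ)
    (hA : ((k : ℂ) • (Aᴴ * A)) * ((k : ℂ) • (Aᴴ * A)) = (k : ℂ) • (Aᴴ * A)) :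
    ((k : ℂ) • ((tensM v A)ᴴ * tensM v A)) * ((k : ℂ) • ((tensM v A)ᴴ * tensM v A)) =
      (k : ℂ) • ((tensM v A)ᴴ * tensM v A) := by
  set W := (tensM v A)ᴴ * tensM v A with hW
  ext c c''
  have hG : ∀ c₂ c₂'', (∑ e', ((k : ℂ) * (Aᴴ * A) c₂ e') * ((k : ℂ) * (Aᴴ * A) e' c₂'')) =
      (k : ℂ) * (Aᴴ * A) c₂ c₂'' := by
    intro c₂ c₂''
    have := congrFun (congrFun hA c₂) c₂''
    simpa [Matrix.mul_apply, Matrix.smul_apply, Finset.mul_sum, mul_assoc, mul_comm, mul_left_comm]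
      using this
  rw [Matrix.mul_apply]
  simp only [Matrix.smul_apply, smul_eq_mul]
  rw [← Equiv.sum_comp (fsplit (q := q) (d' := d')).symm
    (fun c' => ((k : ℂ) * W c c') * ((k : ℂ) * W c' c''))]
  simp only [hW, conjT_mul, Equiv.apply_symm_apply, Fintype.sum_prod_type]
  have key : ∀ (p' : Fin q), ∀ (e' : Fin d'),
      ((k:ℂ) * ((starRingEnd ℂ) (v (fsplit c).1) * v p' * (Aᴴ*A) (fsplit c).2 e')) *
      ((k:ℂ) * ((starRingEnd ℂ) (v p') * v (fsplit c'').1 * (Aᴴ*A) e' (fsplit c'').2)) =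
      (((starRingEnd ℂ) (v p') * v p') *
          (((k:ℂ) * (Aᴴ*A) (fsplit c).2 e') * ((k:ℂ) * (Aᴴ*A) e' (fsplit c'').2))) *
        ((starRingEnd ℂ) (v (fsplit c).1) * v (fsplit c'').1) := by
    intro p' e'; ring
  simp only [key]
  simp only [← Finset.sum_mul]
  rw [← Finset.sum_mul_sum]
  rw [hv, hG, one_mul]
  ring

lemma inner_eq (x y : EuclideanSpace ℂ (Fin q)) :
    (inner ℂ x y : ℂ) = ∑ p, (starRingEnd ℂ) (x p) * y p := by
  simp [PiLp.inner_apply, RCLike.inner_apply, mul_comm]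

lemma hasMUSEBk_mul (k d d' q t : ℕ) (h1 : HasMUSEBk k d d' t) (h2 : HasMUB q t) :
    HasMUSEBk k d (q * d') t := by
  obtain ⟨B, hBse, hBmu⟩ := h1
  obtain ⟨C, hCo, hCmu⟩ := h2
  have hCite : ∀ a i j, (inner ℂ (C a i) (C a j) : ℂ) = if i = j then 1 else 0 := fun a =>
    orthonormal_iff_ite.mp (hCo a)
  have hv1 : ∀ a s, ∑ p, (starRingEnd ℂ) (C a s p) * C a s p = 1 := by
    intro a s
    rw [← inner_eq, hCite a s s, if_pos rfl]
  let e : Fin (d * (q * d')) ≃ Fin (d * d') × Fin q :=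
    (finCongr (by ring)).trans finProdFinEquiv.symm
  refine ⟨fun a m => tensM (C a (e m).2) (B a (e m).1), fun a => ⟨fun m => ?_, fun m m' => ?_⟩,
    fun a b hab m m' => ?_⟩
  · constructor
    · rw [rank_tensM _ ?_ _]
      · exact ((hBse a).1 (e m).1).1
      · by_contra h
        push_neg at h
        have := hv1 a (e m).2
        simp only [h] at this
        simp at this
    · exact idem_tensM k _ (hv1 a (e m).2) _ ((hBse a).1 (e m).1).2
  · rw [matInner_tensM, ← inner_eq, hCite, (hBse a).2]
    by_cases h : m = m'
    · subst h; simp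
    · have : (e m).1 ≠ (e m').1 ∨ (e m).2 ≠ (e m').2 := by
        by_contra hc
        push_neg at hc
        exact h (e.injective (Prod.ext hc.1 hc.2))
      rcases this with h1 | h1
      · simp [if_neg h, if_neg h1]
      · simp [if_neg h, if_neg h1]
  · rw [matInner_tensM, ← inner_eq, norm_mul, hCmu a b hab, hBmu a b hab]
    rw [div_mul_div_comm, one_mul, ← Real.sqrt_mul (by positivity)]
    congr 1
    push_cast
    ring

lemma hasMUSEBk_mono {k m n t t' : ℕ} (h : t' ≤ t) :
    HasMUSEBk k m n t → HasMUSEBk k m n t' := by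
  rintro ⟨B, h1, h2⟩
  exact ⟨fun a => B (Fin.castLE h a), fun a => h1 _,
    fun a b hab => h2 _ _ fun he => hab (Fin.castLE_injective h he)⟩

lemma hasMUB_mono {q t t' : ℕ} (h : t' ≤ t) : HasMUB q t → HasMUB q t' := by
  rintro ⟨B, h1, h2⟩
  exact ⟨fun a => B (Fin.castLE h a), fun a => h1 _,
    fun a b hab => h2 _ _ fun he => hab (Fin.castLE_injective h he)⟩

end Aux

/-- If there exist `t₁` mutually unbiased SEBks in `ℂ^d ⊗ ℂ^{d'}` and `t₂` mutually
unbiased bases of `ℂ^q`, then there exist at least `min{t₁,t₂}` mutually unbiased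
SEBks in `ℂ^d ⊗ ℂ^{qd'}`; i.e. `M_k(d, qd') ≥ min{N(q), M_k(d,d')}`. -/
theorem Mnum_mub_bound (k d d' q : ℕ) :
    (∀ t₁ t₂ : ℕ, HasMUSEBk k d d' t₁ → HasMUB q t₂ → HasMUSEBk k d (q * d') (min t₁ t₂)) ∧
    min (Nnum q) (Mnum k d d') ≤ Mnum k d (q * d') := by
  have main : ∀ t₁ t₂ : ℕ, HasMUSEBk k d d' t₁ → HasMUB q t₂ →
      HasMUSEBk k d (q * d') (min t₁ t₂) := fun t₁ t₂ h1 h2 =>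
    Aux.hasMUSEBk_mul k d d' q _ (Aux.hasMUSEBk_mono (min_le_left _ _) h1)
      (Aux.hasMUB_mono (min_le_right _ _) h2)
  refine ⟨main, ?_⟩
  by_contra h
  push_neg at h
  rw [lt_min_iff] at h
  obtain ⟨hN, hM⟩ := h
  set Z := Mnum k d (q * d') with hZ
  have htop : Z ≠ ⊤ := ne_top_of_lt hN
  lift Z to ℕ using htop with n hn
  rw [Nnum, lt_sSup_iff] at hN
  obtain ⟨c, ⟨t₂, rfl, ht₂⟩, hlt₂⟩ := hN
  rw [Mnum, lt_sSup_iff] at hM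
  obtain ⟨c', ⟨t₁, rfl, ht₁⟩, hlt₁⟩ := hM
  have hn₂ : n < t₂ := by rwa [Nat.cast_lt] at hlt₂
  have hn₁ : n < t₁ := by rwa [Nat.cast_lt] at hlt₁
  have hmem : ((min t₁ t₂ : ℕ) : ℕ∞) ∈
      {c : ℕ∞ | ∃ t : ℕ, c = t ∧ HasMUSEBk k d (q * d') t} :=
    ⟨min t₁ t₂, rfl, main t₁ t₂ ht₁ ht₂⟩
  have hle : ((min t₁ t₂ : ℕ) : ℕ∞) ≤ (n : ℕ∞) := hZ ▸ le_sSup hmem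
  have : min t₁ t₂ ≤ n := by rwa [Nat.cast_le] at hle
  exact absurd this (not_le.mpr (lt_min hn₁ hn₂))
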